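/- arXiv:1708.06271 — 2 statements merged into one kernel-verified Lean document; each statement's English description precedes it below -/
import Mathlib

section
/- For every probability measure μ on E_Δ and every t ≥ 0: (i) M^μ_t = G^{μ,1}_t, where G^{μ,1}_t = {Λ ⊂ Ω : there exist Λ' ∈ F^0_t and Γ ∈ F^0_{t+} with Λ △ Λ' ⊂ Γ and P^h_μ(Γ; t<ζ) = 0}; (ii) the extension of Q̄_{μ,t} to M^μ_t is a well-defined σ-finite measure (in particular its value Q̄_{μ,t}(Λ') does not depend on the choice of Λ'), and the extension of P^h_μ(·; t<ζ) to M^μ_t is a well-defined finite measure. -/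
open MeasureTheory Set Filter
open scoped NNReal ENNReal

noncomputable section

variable {S : Type*} [MeasurableSpace S] {Ω : Type*}

/-- The natural filtration `F⁰_t = σ(X_s : s ∈ [0,t])` of the process `X`. -/
def F0 (X : ℝ≥0 → Ω → S) (t : ℝ≥0) : MeasurableSpace Ω :=
  ⨆ s ∈ Set.Iic t, MeasurableSpace.comap (X s) inferInstance

/-- `F⁰_∞ = σ(X_s : s ≥ 0)`. -/
def F0inf (X : ℝ≥0 → Ω → S) : MeasurableSpace Ω :=
  ⨆ s : ℝ≥0, MeasurableSpace.comap (X s) inferInstance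

/-- `F⁰_{t+} = ⋂_{s > t} F⁰_s`. -/
def F0plus (X : ℝ≥0 → Ω → S) (t : ℝ≥0) : MeasurableSpace Ω :=
  ⨅ s ∈ Set.Ioi t, F0 X s

/-- The life time `ζ(ω) = inf {t ≥ 0 : X_t(ω) = Δ}` (with value `∞` if the path
never reaches the cemetery `Δ`). -/
def lifetime (Δ : S) (X : ℝ≥0 → Ω → S) (ω : Ω) : ℝ≥0∞ :=
  ⨅ (t : ℝ≥0) (_ : X t ω = Δ), (t : ℝ≥0∞)

variable (Δ : S)

/-- `Q̄_{x,t}[f ; t < ζ] := h(x)·E^h_x[e^{αt}·f/h(X_t) ; t < ζ]`, the σ-finite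
distribution up to time `t` applied to a nonnegative integrand `f`. -/
def Qbar (α : ℝ) (h : S → ℝ≥0∞) (X : ℝ≥0 → Ω → S)
    (P : S → @Measure Ω (F0inf X)) (x : S) (t : ℝ≥0) (f : Ω → ℝ≥0∞) : ℝ≥0∞ :=
  h x * ∫⁻ ω in {ω | (t : ℝ≥0∞) < lifetime Δ X ω},
      ENNReal.ofReal (Real.exp (α * (t : ℝ))) * f ω * (h (X t ω))⁻¹ ∂(P x)

/-- `Q̄_{x,t}(Λ ; t < ζ)` of a set `Λ`. -/
def QbarSet (α : ℝ) (h : S → ℝ≥0∞) (X : ℝ≥0 → Ω → S)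
    (P : S → @Measure Ω (F0inf X)) (x : S) (t : ℝ≥0) (Λ : Set Ω) : ℝ≥0∞ :=
  Qbar Δ α h X P x t (Λ.indicator 1)

/-- `Q̄_{μ,t}(Λ ; t < ζ) = ∫ Q̄_{x,t}(Λ ; t < ζ) μ(dx)` (note `Q̄_{Δ,t} = 0`
automatically since `h Δ = 0`). -/
def Qmu (α : ℝ) (h : S → ℝ≥0∞) (X : ℝ≥0 → Ω → S)
    (P : S → @Measure Ω (F0inf X)) (μ : Measure S) (t : ℝ≥0) (Λ : Set Ω) : ℝ≥0∞ :=
  ∫⁻ x, QbarSet Δ α h X P x t Λ ∂μ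

/-- `P^h_μ(Λ) = ∫ P^h_x(Λ) μ(dx)`. -/
def Pmu (X : ℝ≥0 → Ω → S) (P : S → @Measure Ω (F0inf X)) (μ : Measure S)
    (Λ : Set Ω) : ℝ≥0∞ :=
  ∫⁻ x, P x Λ ∂μ

/-- `P^h_μ(Λ ; t < ζ)`. -/
def PmuT (X : ℝ≥0 → Ω → S) (P : S → @Measure Ω (F0inf X)) (μ : Measure S)
    (t : ℝ≥0) (Λ : Set Ω) : ℝ≥0∞ :=
  ∫⁻ x, P x (Λ ∩ {ω | (t : ℝ≥0∞) < lifetime Δ X ω}) ∂μ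

/-- The augmented σ-field `M^μ_t`. -/
def Mmu (α : ℝ) (h : S → ℝ≥0∞) (X : ℝ≥0 → Ω → S)
    (P : S → @Measure Ω (F0inf X)) (μ : Measure S) (t : ℝ≥0) : Set (Set Ω) :=
  {Λ | ∃ Λ' Γ : Set Ω, MeasurableSet[F0 X t] Λ' ∧ MeasurableSet[F0plus X t] Γ ∧
      symmDiff Λ Λ' ⊆ Γ ∧ ∀ T : ℝ≥0, t < T → Qmu Δ α h X P μ T Γ = 0}

/-- The auxiliary family `G^{μ,1}_t`. -/
def Gmu1 (α : ℝ) (h : S → ℝ≥0∞) (X : ℝ≥0 → Ω → S)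
    (P : S → @Measure Ω (F0inf X)) (μ : Measure S) (t : ℝ≥0) : Set (Set Ω) :=
  {Λ | ∃ Λ' Γ : Set Ω, MeasurableSet[F0 X t] Λ' ∧ MeasurableSet[F0plus X t] Γ ∧
      symmDiff Λ Λ' ⊆ Γ ∧ PmuT Δ X P μ t Γ = 0}

/-- The auxiliary family `G^{μ,2}_t`. -/
def Gmu2 (α : ℝ) (h : S → ℝ≥0∞) (X : ℝ≥0 → Ω → S)
    (P : S → @Measure Ω (F0inf X)) (μ : Measure S) (t : ℝ≥0) : Set (Set Ω) :=
  {Λ | ∃ Λ' Γ : Set Ω, MeasurableSet[F0plus X t] Λ' ∧ MeasurableSet[F0plus X t] Γ ∧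
      symmDiff Λ Λ' ⊆ Γ ∧ PmuT Δ X P μ t Γ = 0}

/-- The `P^h_μ`-augmentation `F^{h,μ}_t` of `F⁰_t` in `F⁰_∞`. -/
def Fhmu (X : ℝ≥0 → Ω → S) (P : S → @Measure Ω (F0inf X)) (μ : Measure S)
    (t : ℝ≥0) : Set (Set Ω) :=
  {Λ | ∃ Λ' Γ : Set Ω, MeasurableSet[F0 X t] Λ' ∧ MeasurableSet[F0inf X] Γ ∧
      symmDiff Λ Λ' ⊆ Γ ∧ Pmu X P μ Γ = 0}

/-- `M_t = ⋂_μ M^μ_t`, the intersection over all probability measures `μ` on `E_Δ`. -/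
def Mt (α : ℝ) (h : S → ℝ≥0∞) (X : ℝ≥0 → Ω → S)
    (P : S → @Measure Ω (F0inf X)) (t : ℝ≥0) : Set (Set Ω) :=
  {Λ | ∀ μ : Measure S, IsProbabilityMeasure μ → Λ ∈ Mmu Δ α h X P μ t}

/-- `M_∞ = σ(⋃_t M_t)`. -/
def Minf (α : ℝ) (h : S → ℝ≥0∞) (X : ℝ≥0 → Ω → S)
    (P : S → @Measure Ω (F0inf X)) : MeasurableSpace Ω :=
  MeasurableSpace.generateFrom {Λ | ∃ t : ℝ≥0, Λ ∈ Mt Δ α h X P t}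

/-- `M^μ_∞ = σ(⋃_t M^μ_t)`. -/
def Mmuinf (α : ℝ) (h : S → ℝ≥0∞) (X : ℝ≥0 → Ω → S)
    (P : S → @Measure Ω (F0inf X)) (μ : Measure S) : MeasurableSpace Ω :=
  MeasurableSpace.generateFrom {Λ | ∃ t : ℝ≥0, Λ ∈ Mmu Δ α h X P μ t}

/-- `M_σ` for an `(M_t)`-stopping time `σ`. -/
def Msigma (α : ℝ) (h : S → ℝ≥0∞) (X : ℝ≥0 → Ω → S)
    (P : S → @Measure Ω (F0inf X)) (σ : Ω → ℝ≥0∞) : Set (Set Ω) :=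
  {Λ | MeasurableSet[Minf Δ α h X P] Λ ∧
      ∀ t : ℝ≥0, Λ ∩ {ω | σ ω ≤ (t : ℝ≥0∞)} ∈ Mt Δ α h X P t}

/-- `M^μ_σ` for an `(M^μ_t)`-stopping time `σ`. -/
def Mmusigma (α : ℝ) (h : S → ℝ≥0∞) (X : ℝ≥0 → Ω → S)
    (P : S → @Measure Ω (F0inf X)) (μ : Measure S) (σ : Ω → ℝ≥0∞) : Set (Set Ω) :=
  {Λ | MeasurableSet[Mmuinf Δ α h X P μ] Λ ∧
      ∀ t : ℝ≥0, Λ ∩ {ω | σ ω ≤ (t : ℝ≥0∞)} ∈ Mmu Δ α h X P μ t}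

/-- `F^{h,μ}_T` for an `(F^{h,μ}_t)`-stopping time `T`. -/
def FhmuStop (X : ℝ≥0 → Ω → S) (P : S → @Measure Ω (F0inf X)) (μ : Measure S)
    (T : Ω → ℝ≥0∞) : Set (Set Ω) :=
  {Λ | ∀ t : ℝ≥0, Λ ∩ {ω | T ω ≤ (t : ℝ≥0∞)} ∈ Fhmu X P μ t}

/-- `X_σ`, with the convention `X_∞ = Δ`. -/
def Xstop (X : ℝ≥0 → Ω → S) (σ : Ω → ℝ≥0∞) (ω : Ω) : S :=
  if σ ω < ∞ then X (σ ω).toNNReal ω else Δ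

/-- The shift `θ_σ` at a random time `σ`. -/
def thetaStop (θ : ℝ≥0 → Ω → Ω) (σ : Ω → ℝ≥0∞) (ω : Ω) : Ω :=
  θ (σ ω).toNNReal ω

/-- `Q̄_{x,σ}[f ; σ < ζ] := h(x)·E^h_x[e^{ασ}·f/h(X_σ) ; σ < ζ]`, the σ-finite
distribution up to a stopping time `σ` applied to a nonnegative integrand `f`. -/
def QbarStop (α : ℝ) (h : S → ℝ≥0∞) (X : ℝ≥0 → Ω → S)
    (P : S → @Measure Ω (F0inf X)) (x : S) (σ : Ω → ℝ≥0∞) (f : Ω → ℝ≥0∞) : ℝ≥0∞ :=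
  h x * ∫⁻ ω in {ω | σ ω < lifetime Δ X ω},
      ENNReal.ofReal (Real.exp (α * (σ ω).toReal)) * f ω * (h (Xstop Δ X σ ω))⁻¹ ∂(P x)

/-- `Q̄_{x,σ}(Λ ; σ < ζ)` of a set `Λ`. -/
def QbarStopSet (α : ℝ) (h : S → ℝ≥0∞) (X : ℝ≥0 → Ω → S)
    (P : S → @Measure Ω (F0inf X)) (x : S) (σ : Ω → ℝ≥0∞) (Λ : Set Ω) : ℝ≥0∞ :=
  QbarStop Δ α h X P x σ (Λ.indicator 1)

/-- The entrance time `D_B = inf {t ≥ 0 : X_t ∈ B}`. -/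
def entranceTime (B : Set S) (X : ℝ≥0 → Ω → S) (ω : Ω) : ℝ≥0∞ :=
  ⨅ (t : ℝ≥0) (_ : X t ω ∈ B), (t : ℝ≥0∞)

/-- The hitting time `σ_B = inf {t > 0 : X_t ∈ B}`. -/
def hittingTime (B : Set S) (X : ℝ≥0 → Ω → S) (ω : Ω) : ℝ≥0∞ :=
  ⨅ (t : ℝ≥0) (_ : 0 < t ∧ X t ω ∈ B), (t : ℝ≥0∞)

/-- A set is universally measurable (`∈ B(E_Δ)*`) if it lies in the completion of
`B(E_Δ)` with respect to every probability measure. -/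
def UniversallyMeasurableSet (A : Set S) : Prop :=
  ∀ ν : Measure S, IsProbabilityMeasure ν → NullMeasurableSet A ν

/-- Iterated kernel integral
`∫ κ_{t₁-t₀}(x,dx₁) ∫ κ_{t₂-t₁}(x₁,dx₂) ⋯ f(x₁,…,xₙ)`, where `t₀` is the
starting time. -/
def iterK (κ : ℝ≥0 → S → Measure S) :
    (n : ℕ) → (Fin (n + 1) → ℝ≥0) → ℝ≥0 → S → ((Fin (n + 1) → S) → ℝ≥0∞) → ℝ≥0∞
  | 0, t, t0, x, f => ∫⁻ y, f (fun _ => y) ∂(κ (t 0 - t0) x)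
  | n + 1, t, t0, x, f =>
      ∫⁻ y, iterK κ n (fun i => t i.succ) (t 0) y (fun v => f (Fin.cons y v))
        ∂(κ (t 0 - t0) x)


/-- `γ = (σ + τ∘θ_σ)_ζ`, the time `σ + τ∘θ_σ` truncated to `∞` off `{σ + τ∘θ_σ < ζ}`. -/
def gammaTime (Δ : S) (X : ℝ≥0 → Ω → S) (θ : ℝ≥0 → Ω → Ω) (σ τ : Ω → ℝ≥0∞)
    (ω : Ω) : ℝ≥0∞ :=
  if σ ω + τ (thetaStop θ σ ω) < lifetime Δ X ω then σ ω + τ (thetaStop θ σ ω)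
  else ∞

end


theorem Mmu_eq_Gmu1_and_extensions_well_defined
    {S : Type*} [MeasurableSpace S] [TopologicalSpace S] [BorelSpace S]
    [StandardBorelSpace S] {Ω : Type*} (Δ : S)
    (X : ℝ≥0 → Ω → S) (θ : ℝ≥0 → Ω → Ω) (P : S → @Measure Ω (F0inf X))
    (h : S → ℝ≥0∞) (α : ℝ) (hα : 0 < α)
    (h_meas : Measurable h) (h_cem : h Δ = 0)
    (h_pos : ∀ x : S, x ≠ Δ → 0 < h x ∧ h x < ∞)
    (hX_rc : ∀ (ω : Ω) (t : ℝ≥0),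
      Filter.Tendsto (fun s => X s ω) (nhdsWithin t (Set.Ioi t)) (nhds (X t ω)))
    (hX_absorb : ∀ (ω : Ω) (s t : ℝ≥0), s ≤ t → X s ω = Δ → X t ω = Δ)
    (hshift : ∀ (s t : ℝ≥0) (ω : Ω), X t (θ s ω) = X (t + s) ω)
    (hP_prob : ∀ x : S, IsProbabilityMeasure (P x))
    (hP_meas : ∀ Λ : Set Ω, MeasurableSet[F0inf X] Λ → Measurable fun x => P x Λ)
    (hP_start : ∀ x : S, P x {ω | X 0 ω = x} = 1)
    (hMarkov : ∀ (s : ℝ≥0) (x : S) (Y : Ω → ℝ≥0∞), Measurable[F0inf X] Y →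
      ∀ Λ : Set Ω, MeasurableSet[F0plus X s] Λ →
        ∫⁻ ω in Λ, Y (θ s ω) ∂(P x)
          = ∫⁻ ω in Λ, (∫⁻ ω', Y ω' ∂(P (X s ω))) ∂(P x))
    (Fk : ℕ → Set S) (hFk_meas : ∀ k, MeasurableSet (Fk k))
    (hFk_mono : Monotone Fk) (hFk_sub : ∀ k, Δ ∉ Fk k)
    (hFk_bd : ∀ k, ∃ c C : ℝ≥0∞, 0 < c ∧ C < ∞ ∧ ∀ x ∈ Fk k, c ≤ h x ∧ h x ≤ C)
    (hFk_full : ∀ x : S, x ≠ Δ →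
      P x {ω | ∀ s : ℝ≥0, (s : ℝ≥0∞) < lifetime Δ X ω → X s ω ∈ ⋃ k, Fk k} = 1)
    :
    ∀ (μ : Measure S), IsProbabilityMeasure μ → ∀ t : ℝ≥0,
      Mmu Δ α h X P μ t = Gmu1 Δ α h X P μ t ∧
      (∀ Λ ∈ Mmu Δ α h X P μ t, ∀ Λ₁ Γ₁ Λ₂ Γ₂ : Set Ω,
        (MeasurableSet[F0 X t] Λ₁ ∧ MeasurableSet[F0plus X t] Γ₁ ∧
          symmDiff Λ Λ₁ ⊆ Γ₁ ∧ ∀ T : ℝ≥0, t < T → Qmu Δ α h X P μ T Γ₁ = 0) →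
        (MeasurableSet[F0 X t] Λ₂ ∧ MeasurableSet[F0plus X t] Γ₂ ∧
          symmDiff Λ Λ₂ ⊆ Γ₂ ∧ ∀ T : ℝ≥0, t < T → Qmu Δ α h X P μ T Γ₂ = 0) →
        Qmu Δ α h X P μ t Λ₁ = Qmu Δ α h X P μ t Λ₂ ∧
          PmuT Δ X P μ t Λ₁ = PmuT Δ X P μ t Λ₂) ∧
      (∃ ν : Set Ω → ℝ≥0∞,
        (∀ Λ Λ' Γ : Set Ω, MeasurableSet[F0 X t] Λ' → MeasurableSet[F0plus X t] Γ →
          symmDiff Λ Λ' ⊆ Γ → (∀ T : ℝ≥0, t < T → Qmu Δ α h X P μ T Γ = 0) →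
          ν Λ = Qmu Δ α h X P μ t Λ') ∧
        ν ∅ = 0 ∧
        (∀ A : ℕ → Set Ω, (∀ n, A n ∈ Mmu Δ α h X P μ t) →
          Pairwise (Function.onFun Disjoint A) → ν (⋃ n, A n) = ∑' n, ν (A n)) ∧
        (∃ B : ℕ → Set Ω, (∀ n, B n ∈ Mmu Δ α h X P μ t) ∧ (⋃ n, B n) = Set.univ ∧
          ∀ n, ν (B n) < ∞)) ∧
      (∃ ν' : Set Ω → ℝ≥0∞,
        (∀ Λ Λ' Γ : Set Ω, MeasurableSet[F0 X t] Λ' → MeasurableSet[F0plus X t] Γ →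
          symmDiff Λ Λ' ⊆ Γ → (∀ T : ℝ≥0, t < T → Qmu Δ α h X P μ T Γ = 0) →
          ν' Λ = PmuT Δ X P μ t Λ') ∧
        ν' ∅ = 0 ∧
        (∀ A : ℕ → Set Ω, (∀ n, A n ∈ Mmu Δ α h X P μ t) →
          Pairwise (Function.onFun Disjoint A) → ν' (⋃ n, A n) = ∑' n, ν' (A n)) ∧
        ν' Set.univ < ∞) := by
  classical
  intro μ hμ t
  letI mΩ : MeasurableSpace Ω := F0inf X
  -- basic measurability facts
  have hXmeas : ∀ s : ℝ≥0, Measurable (X s) := by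
    intro s
    have hle : MeasurableSpace.comap (X s) inferInstance ≤ F0inf X :=
      le_iSup (fun u : ℝ≥0 => MeasurableSpace.comap (X u) inferInstance) s
    exact fun U hU => hle _ ⟨U, hU, rfl⟩
  have hF0_le : ∀ s : ℝ≥0, F0 X s ≤ F0inf X := fun s =>
    iSup₂_le fun u _ => le_iSup (fun v : ℝ≥0 => MeasurableSpace.comap (X v) inferInstance) u
  have hF0plus_le : ∀ s : ℝ≥0, F0plus X s ≤ F0inf X := fun s =>
    le_trans (iInf₂_le (s + 1) (lt_add_one s)) (hF0_le (s + 1))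
  have hpre : ∀ u : ℝ≥0, u ≤ t → ∀ U : Set S, MeasurableSet U →
      MeasurableSet[F0 X t] ((X u) ⁻¹' U) := by
    intro u hu U hU
    have hle : MeasurableSpace.comap (X u) inferInstance ≤ F0 X t :=
      le_iSup₂ (f := fun (v : ℝ≥0) (_ : v ∈ Set.Iic t) =>
        MeasurableSpace.comap (X v) inferInstance) u hu
    exact hle _ ⟨U, hU, rfl⟩
  -- lifetime facts
  set A : ℝ≥0 → Set Ω := fun T => {ω | (T : ℝ≥0∞) < lifetime Δ X ω} with hA_def
  have hlife_le : ∀ (ω : Ω) (s : ℝ≥0), X s ω = Δ → lifetime Δ X ω ≤ (s : ℝ≥0∞) := by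
    intro ω s hs
    exact iInf₂_le s hs
  have hX_ne : ∀ (ω : Ω) (T : ℝ≥0), ω ∈ A T → X T ω ≠ Δ := by
    intro ω T hω hc
    exact absurd (hlife_le ω T hc) (not_le.mpr hω)
  have hle_life : ∀ (ω : Ω) (q : ℝ≥0), X q ω ≠ Δ → (q : ℝ≥0∞) ≤ lifetime Δ X ω := by
    intro ω q hne
    by_contra hc
    push_neg at hc
    have hc' : (⨅ (s : ℝ≥0) (_ : X s ω = Δ), (s : ℝ≥0∞)) < (q : ℝ≥0∞) := hc
    rw [iInf_lt_iff] at hc'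
    obtain ⟨s, hs⟩ := hc'
    rw [iInf_lt_iff] at hs
    obtain ⟨hXs, hsq⟩ := hs
    exact hne (hX_absorb ω s q (le_of_lt (ENNReal.coe_lt_coe.mp hsq)) hXs)
  have hA_approx : ∀ (T : ℝ≥0) (ω : Ω), ω ∈ A T →
      ∃ n : ℕ, ω ∈ A (T + ((n : ℝ≥0) + 1)⁻¹) := by
    intro T ω hω
    have hT : (T : ℝ≥0∞) < lifetime Δ X ω := hω
    have hne : lifetime Δ X ω - (T : ℝ≥0∞) ≠ 0 := by
      simpa [tsub_eq_zero_iff_le] using hT.not_ge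
    obtain ⟨n, hn⟩ := ENNReal.exists_inv_nat_lt hne
    refine ⟨n, ?_⟩
    have h1 : ((n : ℝ≥0∞) + 1)⁻¹ ≤ ((n : ℝ≥0∞))⁻¹ :=
      ENNReal.inv_le_inv.mpr (le_add_of_nonneg_right zero_le_one)
    have h2 : ((n : ℝ≥0∞) + 1)⁻¹ < lifetime Δ X ω - (T : ℝ≥0∞) := lt_of_le_of_lt h1 hn
    have h3 : ((n : ℝ≥0∞) + 1)⁻¹ + (T : ℝ≥0∞) < lifetime Δ X ω := lt_tsub_iff_right.mp h2
    show ((T + ((n : ℝ≥0) + 1)⁻¹ : ℝ≥0) : ℝ≥0∞) < lifetime Δ X ω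
    have hcoe : ((T + ((n : ℝ≥0) + 1)⁻¹ : ℝ≥0) : ℝ≥0∞) = ((n : ℝ≥0∞) + 1)⁻¹ + (T : ℝ≥0∞) := by
      have h0 : ((n : ℝ≥0) + 1) ≠ 0 := by positivity
      rw [ENNReal.coe_add, ENNReal.coe_inv h0, add_comm]
      push_cast
      rfl
    rw [hcoe]
    exact h3
  have hA_eq : ∀ T : ℝ≥0, A T = ⋃ n : ℕ, (X (T + ((n : ℝ≥0) + 1)⁻¹)) ⁻¹' ({Δ}ᶜ) := by
    intro T
    ext ω
    simp only [Set.mem_iUnion, Set.mem_preimage, Set.mem_compl_iff, Set.mem_singleton_iff]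
    constructor
    · intro hω
      obtain ⟨n, hn⟩ := hA_approx T ω hω
      exact ⟨n, hX_ne ω _ hn⟩
    · rintro ⟨n, hn⟩
      have hle := hle_life ω _ hn
      have hlt : (T : ℝ≥0∞) < ((T + ((n : ℝ≥0) + 1)⁻¹ : ℝ≥0) : ℝ≥0∞) := by
        rw [ENNReal.coe_lt_coe]
        exact lt_add_of_pos_right T (by positivity)
      exact lt_of_lt_of_le hlt hle
  have hA_meas : ∀ T : ℝ≥0, MeasurableSet (A T) := by
    intro T
    rw [hA_eq T]
    exact MeasurableSet.iUnion fun n => (hXmeas _) (measurableSet_singleton Δ).compl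
  have hA_anti : ∀ T T' : ℝ≥0, T ≤ T' → A T' ⊆ A T := by
    intro T T' hTT ω hω
    exact lt_of_le_of_lt (ENNReal.coe_le_coe.mpr hTT) hω
  -- the density
  set g : ℝ≥0 → Ω → ℝ≥0∞ :=
    fun T ω => ENNReal.ofReal (Real.exp (α * (T : ℝ))) * (h (X T ω))⁻¹ with hg_def
  have hg_meas : ∀ T : ℝ≥0, Measurable (g T) :=
    fun T => measurable_const.mul ((h_meas.comp (hXmeas T)).inv)
  have hg_ne : ∀ (T : ℝ≥0) (ω : Ω), ω ∈ A T → g T ω ≠ 0 := by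
    intro T ω hω
    have h1 : ENNReal.ofReal (Real.exp (α * (T : ℝ))) ≠ 0 :=
      (ENNReal.ofReal_pos.mpr (Real.exp_pos _)).ne'
    have h2 : (h (X T ω))⁻¹ ≠ 0 :=
      ENNReal.inv_ne_zero.mpr (h_pos (X T ω) (hX_ne ω T hω)).2.ne
    exact mul_ne_zero h1 h2
  have hQbar_eq : ∀ (x : S) (T : ℝ≥0) (Γ : Set Ω),
      QbarSet Δ α h X P x T Γ = h x * ∫⁻ ω in A T, Γ.indicator (g T) ω ∂(P x) := by
    intro x T Γ
    simp only [QbarSet, Qbar]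
    congr 1
    refine lintegral_congr fun ω => ?_
    by_cases hω : ω ∈ Γ
    · simp [hω, hg_def, mul_assoc]
    · simp [hω]
  have hQbar_measx : ∀ (T : ℝ≥0) (Γ : Set Ω), MeasurableSet Γ →
      Measurable fun x => QbarSet Δ α h X P x T Γ := by
    intro T Γ hΓ
    have heq : (fun x => QbarSet Δ α h X P x T Γ) =
        fun x => h x * ∫⁻ ω, (A T).indicator (Γ.indicator (g T)) ω ∂(P x) := by
      funext x
      rw [hQbar_eq, lintegral_indicator (hA_meas T)]
    rw [heq]
    exact h_meas.mul ((Measure.measurable_lintegral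
      (((hg_meas T).indicator hΓ).indicator (hA_meas T))).comp
      (Measure.measurable_of_measurable_coe _ hP_meas))
  
  -- key characterization of null sets
  have hKx : ∀ (T : ℝ≥0) (Γ : Set Ω), MeasurableSet Γ → ∀ x : S,
      (QbarSet Δ α h X P x T Γ = 0 ↔ h x = 0 ∨ P x (Γ ∩ A T) = 0) := by
    intro T Γ hΓ x
    rw [hQbar_eq, mul_eq_zero]
    refine or_congr Iff.rfl ?_
    rw [lintegral_indicator hΓ, Measure.restrict_restrict hΓ]
    constructor
    · intro h0
      rw [lintegral_eq_zero_iff (hg_meas T)] at h0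
      have h1 := (ae_restrict_iff' (hΓ.inter (hA_meas T))).mp h0
      rw [measure_eq_zero_iff_ae_notMem]
      filter_upwards [h1] with ω hω hmem
      exact hg_ne T ω hmem.2 (hω hmem)
    · intro h0
      rw [Measure.restrict_eq_zero.mpr h0, lintegral_zero_measure]
  have hKQ : ∀ (T : ℝ≥0) (Γ : Set Ω), MeasurableSet Γ →
      (Qmu Δ α h X P μ T Γ = 0 ↔ ∀ᵐ x ∂μ, h x = 0 ∨ P x (Γ ∩ A T) = 0) := by
    intro T Γ hΓ
    show (∫⁻ x, QbarSet Δ α h X P x T Γ ∂μ) = 0 ↔ _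
    rw [lintegral_eq_zero_iff (hQbar_measx T Γ hΓ)]
    rw [Filter.EventuallyEq]
    refine Filter.eventually_congr (Filter.Eventually.of_forall fun x => ?_)
    rw [Pi.zero_apply]
    exact hKx T Γ hΓ x
  have hKP : ∀ Γ : Set Ω, MeasurableSet Γ →
      (PmuT Δ X P μ t Γ = 0 ↔ ∀ᵐ x ∂μ, P x (Γ ∩ A t) = 0) := by
    intro Γ hΓ
    show (∫⁻ x, P x (Γ ∩ A t) ∂μ) = 0 ↔ _
    rw [lintegral_eq_zero_iff (hP_meas _ (hΓ.inter (hA_meas t)))]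
    rw [Filter.EventuallyEq]
    refine Filter.eventually_congr (Filter.Eventually.of_forall fun x => ?_)
    rw [Pi.zero_apply]
  have hPΔ : ∀ T : ℝ≥0, P Δ (A T) = 0 := by
    intro T
    haveI := hP_prob Δ
    have hm0 : MeasurableSet {ω | X 0 ω = Δ} := (hXmeas 0) (measurableSet_singleton Δ)
    have hsub : A T ⊆ {ω | X 0 ω = Δ}ᶜ := by
      intro ω hω hc
      have := hlife_le ω 0 hc
      exact absurd (lt_of_le_of_lt (le_trans this (by exact_mod_cast zero_le)) hω)
        (lt_irrefl _)
    refine measure_mono_null hsub ?_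
    rw [measure_compl hm0 (measure_ne_top _ _), hP_start Δ, measure_univ, tsub_self]
  have hhx : ∀ x : S, h x = 0 → x = Δ := by
    intro x hx
    by_contra hne
    exact (h_pos x hne).1.ne' hx
  have hK3 : ∀ Γ : Set Ω, MeasurableSet Γ →
      ((∀ T : ℝ≥0, t < T → Qmu Δ α h X P μ T Γ = 0) ↔ PmuT Δ X P μ t Γ = 0) := by
    intro Γ hΓ
    constructor
    · intro hQ
      rw [hKP Γ hΓ]
      have hae : ∀ᵐ x ∂μ, ∀ n : ℕ, h x = 0 ∨ P x (Γ ∩ A (t + ((n : ℝ≥0) + 1)⁻¹)) = 0 :=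
        ae_all_iff.mpr fun n => (hKQ _ Γ hΓ).mp
          (hQ _ (lt_add_of_pos_right t (by positivity)))
      filter_upwards [hae] with x hx
      by_cases hx0 : h x = 0
      · rw [hhx x hx0]
        exact measure_mono_null Set.inter_subset_right (hPΔ t)
      · have hn : ∀ n : ℕ, P x (Γ ∩ A (t + ((n : ℝ≥0) + 1)⁻¹)) = 0 :=
          fun n => (hx n).resolve_left hx0
        have hsub : Γ ∩ A t ⊆ ⋃ n : ℕ, Γ ∩ A (t + ((n : ℝ≥0) + 1)⁻¹) := by
          rintro ω ⟨hωΓ, hωA⟩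
          obtain ⟨n, hn'⟩ := hA_approx t ω hωA
          exact Set.mem_iUnion.mpr ⟨n, hωΓ, hn'⟩
        exact measure_mono_null hsub (measure_iUnion_null hn)
    · intro hP T hT
      rw [hKQ T Γ hΓ]
      have hae := (hKP Γ hΓ).mp hP
      filter_upwards [hae] with x hx
      exact Or.inr (measure_mono_null
        (Set.inter_subset_inter_right Γ (hA_anti t T (le_of_lt hT))) hx)
  -- part (i)
  have hMG : Mmu Δ α h X P μ t = Gmu1 Δ α h X P μ t := by
    ext Λ
    simp only [Mmu, Gmu1, Set.mem_setOf_eq]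
    constructor
    · rintro ⟨Λ', Γ, m1, m2, s1, q1⟩
      exact ⟨Λ', Γ, m1, m2, s1, (hK3 Γ ((hF0plus_le t) _ m2)).mp q1⟩
    · rintro ⟨Λ', Γ, m1, m2, s1, p1⟩
      exact ⟨Λ', Γ, m1, m2, s1, (hK3 Γ ((hF0plus_le t) _ m2)).mpr p1⟩
  
  -- uniqueness of the extension
  have hind_sub : ∀ (Λ₁ Λ₂ : Set Ω) (T : ℝ≥0),
      {ω | Λ₁.indicator (g T) ω ≠ Λ₂.indicator (g T) ω} ⊆ symmDiff Λ₁ Λ₂ := by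
    intro Λ₁ Λ₂ T ω hω
    rw [Set.mem_symmDiff]
    by_cases h1 : ω ∈ Λ₁ <;> by_cases h2 : ω ∈ Λ₂
    · exact absurd (by simp [h1, h2]) hω
    · exact Or.inl ⟨h1, h2⟩
    · exact Or.inr ⟨h2, h1⟩
    · exact absurd (by simp [h1, h2]) hω
  have huniq : ∀ Λ ∈ Mmu Δ α h X P μ t, ∀ Λ₁ Γ₁ Λ₂ Γ₂ : Set Ω,
      (MeasurableSet[F0 X t] Λ₁ ∧ MeasurableSet[F0plus X t] Γ₁ ∧
        symmDiff Λ Λ₁ ⊆ Γ₁ ∧ ∀ T : ℝ≥0, t < T → Qmu Δ α h X P μ T Γ₁ = 0) →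
      (MeasurableSet[F0 X t] Λ₂ ∧ MeasurableSet[F0plus X t] Γ₂ ∧
        symmDiff Λ Λ₂ ⊆ Γ₂ ∧ ∀ T : ℝ≥0, t < T → Qmu Δ α h X P μ T Γ₂ = 0) →
      Qmu Δ α h X P μ t Λ₁ = Qmu Δ α h X P μ t Λ₂ ∧
        PmuT Δ X P μ t Λ₁ = PmuT Δ X P μ t Λ₂ := by
    rintro Λ hΛ Λ₁ Γ₁ Λ₂ Γ₂ ⟨m1, g1, s1, q1⟩ ⟨m2, g2, s2, q2⟩
    have hΓm : MeasurableSet (Γ₁ ∪ Γ₂) :=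
      ((hF0plus_le t) _ g1).union ((hF0plus_le t) _ g2)
    have hQΓ : ∀ T : ℝ≥0, t < T → Qmu Δ α h X P μ T (Γ₁ ∪ Γ₂) = 0 := by
      intro T hT
      rw [hKQ T _ hΓm]
      filter_upwards [(hKQ T Γ₁ ((hF0plus_le t) _ g1)).mp (q1 T hT),
        (hKQ T Γ₂ ((hF0plus_le t) _ g2)).mp (q2 T hT)] with x hx1 hx2
      by_cases hx0 : h x = 0
      · exact Or.inl hx0
      · refine Or.inr ?_
        rw [Set.union_inter_distrib_right]
        exact measure_union_null (hx1.resolve_left hx0) (hx2.resolve_left hx0)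
    have hPΓ : PmuT Δ X P μ t (Γ₁ ∪ Γ₂) = 0 := (hK3 _ hΓm).mp hQΓ
    have hae : ∀ᵐ x ∂μ, P x ((Γ₁ ∪ Γ₂) ∩ A t) = 0 := (hKP _ hΓm).mp hPΓ
    have hsub12 : symmDiff Λ₁ Λ₂ ⊆ Γ₁ ∪ Γ₂ := by
      refine Set.Subset.trans ?_ (Set.union_subset_union (symmDiff_comm Λ Λ₁ ▸ s1) s2)
      exact symmDiff_triangle Λ₁ Λ Λ₂
    constructor
    · refine lintegral_congr_ae ?_
      filter_upwards [hae] with x hx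
      rw [hQbar_eq, hQbar_eq]
      congr 1
      refine lintegral_congr_ae ?_
      have hres : (P x).restrict (A t) (Γ₁ ∪ Γ₂) = 0 := by
        rw [Measure.restrict_apply hΓm]
        exact hx
      have hnull : (P x).restrict (A t) {ω | Λ₁.indicator (g t) ω ≠ Λ₂.indicator (g t) ω} = 0 :=
        measure_mono_null (Set.Subset.trans (hind_sub Λ₁ Λ₂ t) hsub12) hres
      rw [Filter.EventuallyEq, ae_iff]
      exact hnull
    · refine lintegral_congr_ae ?_
      filter_upwards [hae] with x hx
      have hsub' : symmDiff (Λ₁ ∩ A t) (Λ₂ ∩ A t) ⊆ (Γ₁ ∪ Γ₂) ∩ A t := by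
        intro ω hω
        rw [Set.mem_symmDiff] at hω
        rcases hω with ⟨⟨hω1, hωA⟩, hω2⟩ | ⟨⟨hω1, hωA⟩, hω2⟩
        · exact ⟨hsub12 (Set.mem_symmDiff.mpr (Or.inl ⟨hω1, fun hc => hω2 ⟨hc, hωA⟩⟩)), hωA⟩
        · exact ⟨hsub12 (Set.mem_symmDiff.mpr (Or.inr ⟨hω1, fun hc => hω2 ⟨hc, hωA⟩⟩)), hωA⟩
      exact measure_congr (measure_symmDiff_eq_zero_iff.mp
        (measure_mono_null hsub' hx))
  -- countable additivity of Qmu t and PmuT t on measurable sets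
  have hQbar_measure : ∀ (x : S) (B : Set Ω), MeasurableSet B →
      QbarSet Δ α h X P x t B =
        h x * ((P x).restrict (A t)).withDensity (g t) B := by
    intro x B hB
    rw [hQbar_eq, withDensity_apply _ hB, lintegral_indicator hB]
  have hQcount : ∀ B : ℕ → Set Ω, (∀ n, MeasurableSet (B n)) →
      Pairwise (Function.onFun Disjoint B) →
      Qmu Δ α h X P μ t (⋃ n, B n) = ∑' n, Qmu Δ α h X P μ t (B n) := by
    intro B hB hd
    show (∫⁻ x, QbarSet Δ α h X P x t (⋃ n, B n) ∂μ) = ∑' n, ∫⁻ x, QbarSet Δ α h X P x t (B n) ∂μ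
    rw [← lintegral_tsum (fun n => (hQbar_measx t (B n) (hB n)).aemeasurable)]
    refine lintegral_congr fun x => ?_
    rw [hQbar_measure x _ (MeasurableSet.iUnion hB)]
    rw [measure_iUnion hd hB, ← ENNReal.tsum_mul_left]
    exact tsum_congr fun n => (hQbar_measure x _ (hB n)).symm
  have hPcount : ∀ B : ℕ → Set Ω, (∀ n, MeasurableSet (B n)) →
      Pairwise (Function.onFun Disjoint B) →
      PmuT Δ X P μ t (⋃ n, B n) = ∑' n, PmuT Δ X P μ t (B n) := by
    intro B hB hd
    show (∫⁻ x, P x ((⋃ n, B n) ∩ A t) ∂μ) = ∑' n, ∫⁻ x, P x (B n ∩ A t) ∂μ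
    rw [← lintegral_tsum (fun n => (hP_meas _ ((hB n).inter (hA_meas t))).aemeasurable)]
    refine lintegral_congr fun x => ?_
    rw [Set.iUnion_inter]
    exact measure_iUnion
      (fun i j hij => ((hd hij).mono Set.inter_subset_left Set.inter_subset_left))
      (fun n => (hB n).inter (hA_meas t))
  
  -- disjointified representations
  have hdisjrep : ∀ B : ℕ → Set Ω, (∀ n, B n ∈ Mmu Δ α h X P μ t) →
      Pairwise (Function.onFun Disjoint B) →
      ∃ D : ℕ → Set Ω, ∃ Γ : Set Ω, (∀ n, MeasurableSet[F0 X t] (D n)) ∧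
        Pairwise (Function.onFun Disjoint D) ∧
        MeasurableSet[F0plus X t] Γ ∧ (∀ T : ℝ≥0, t < T → Qmu Δ α h X P μ T Γ = 0) ∧
        (∀ n, symmDiff (B n) (D n) ⊆ Γ) ∧ symmDiff (⋃ n, B n) (⋃ n, D n) ⊆ Γ := by
    intro B hB hd
    have hB' : ∀ n, ∃ Λ' Γ : Set Ω, MeasurableSet[F0 X t] Λ' ∧
        MeasurableSet[F0plus X t] Γ ∧ symmDiff (B n) Λ' ⊆ Γ ∧
        ∀ T : ℝ≥0, t < T → Qmu Δ α h X P μ T Γ = 0 := fun n => hB n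
    choose Λ' Γ' hm hg hs hq using hB'
    have hsubn : ∀ n, symmDiff (B n) (disjointed Λ' n) ⊆ ⋃ m, Γ' m := by
      intro n ω hω
      rw [Set.mem_symmDiff] at hω
      rcases hω with ⟨hω1, hω2⟩ | ⟨hω1, hω2⟩
      · by_cases hωΛ : ω ∈ Λ' n
        · have : ω ∉ Set.iInter fun i => Set.iInter fun _ : i < n => (Λ' i)ᶜ := by
            intro hc
            exact hω2 (by rw [disjointed_eq_inter_compl]; exact ⟨hωΛ, hc⟩)
          simp only [Set.mem_iInter, Set.mem_compl_iff, not_forall, not_not] at this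
          obtain ⟨i, hi, hωi⟩ := this
          have hωBi : ω ∉ B i :=
            fun hc => Set.disjoint_left.mp (hd (Nat.ne_of_lt hi).symm) hω1 hc
          exact Set.mem_iUnion.mpr ⟨i, hs i (Set.mem_symmDiff.mpr (Or.inr ⟨hωi, hωBi⟩))⟩
        · exact Set.mem_iUnion.mpr ⟨n, hs n (Set.mem_symmDiff.mpr (Or.inl ⟨hω1, hωΛ⟩))⟩
      · have hωΛ : ω ∈ Λ' n := disjointed_subset Λ' n hω1
        exact Set.mem_iUnion.mpr ⟨n, hs n (Set.mem_symmDiff.mpr (Or.inr ⟨hωΛ, hω2⟩))⟩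
    refine ⟨disjointed Λ', ⋃ n, Γ' n, fun n => MeasurableSet.disjointed hm n,
      disjoint_disjointed Λ', MeasurableSet.iUnion hg, ?_, hsubn, ?_⟩
    · intro T hT
      rw [hKQ T _ (MeasurableSet.iUnion fun n => (hF0plus_le t) _ (hg n))]
      have hae : ∀ᵐ x ∂μ, ∀ n : ℕ, h x = 0 ∨ P x (Γ' n ∩ A T) = 0 :=
        ae_all_iff.mpr fun n => (hKQ T (Γ' n) ((hF0plus_le t) _ (hg n))).mp (hq n T hT)
      filter_upwards [hae] with x hx
      by_cases hx0 : h x = 0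
      · exact Or.inl hx0
      · refine Or.inr ?_
        rw [Set.iUnion_inter]
        exact measure_iUnion_null fun n => (hx n).resolve_left hx0
    · intro ω hω
      rw [Set.mem_symmDiff] at hω
      rcases hω with ⟨hω1, hω2⟩ | ⟨hω1, hω2⟩
      · obtain ⟨n, hn⟩ := Set.mem_iUnion.mp hω1
        have hωD : ω ∉ disjointed Λ' n := fun hc => hω2 (Set.mem_iUnion.mpr ⟨n, hc⟩)
        exact hsubn n (Set.mem_symmDiff.mpr (Or.inl ⟨hn, hωD⟩))
      · obtain ⟨n, hn⟩ := Set.mem_iUnion.mp hω1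
        have hωB : ω ∉ B n := fun hc => hω2 (Set.mem_iUnion.mpr ⟨n, hc⟩)
        exact hsubn n (Set.mem_symmDiff.mpr (Or.inr ⟨hn, hωB⟩))
  
  have hQempty : ∀ T : ℝ≥0, Qmu Δ α h X P μ T (∅ : Set Ω) = 0 := by
    intro T
    show (∫⁻ x, QbarSet Δ α h X P x T ∅ ∂μ) = 0
    have hz : ∀ x, QbarSet Δ α h X P x T (∅ : Set Ω) = 0 := by
      intro x
      rw [hQbar_eq]
      simp
    simp only [hz]
    exact lintegral_zero
  have hQzero : ∀ B : Set Ω, MeasurableSet B →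
      (∀ x : S, x ≠ Δ → P x (B ∩ A t) = 0) → Qmu Δ α h X P μ t B = 0 := by
    intro B hB hx0
    show (∫⁻ x, QbarSet Δ α h X P x t B ∂μ) = 0
    have hz : ∀ x, QbarSet Δ α h X P x t B = 0 := by
      intro x
      by_cases hx : x = Δ
      · exact (hKx t B hB x).mpr (Or.inl (by rw [hx, h_cem]))
      · exact (hKx t B hB x).mpr (Or.inr (hx0 x hx))
    simp only [hz]
    exact lintegral_zero
  have hnull_of_one : ∀ (x : S) (B s : Set Ω), MeasurableSet B → P x s = 1 →
      (∀ ω ∈ s, ω ∉ B) → P x B = 0 := by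
    intro x B s hB hs hdis
    haveI := hP_prob x
    have h1 : s ⊆ Bᶜ := fun ω hω => hdis ω hω
    have h2 : (1 : ℝ≥0∞) ≤ P x Bᶜ := hs ▸ measure_mono h1
    have h3 := measure_add_measure_compl (μ := P x) hB
    rw [measure_univ] at h3
    by_contra hne
    have h4 : (1 : ℝ≥0∞) < 1 + P x B := ENNReal.lt_add_right ENNReal.one_ne_top hne
    have h5 : (1 : ℝ≥0∞) + P x B ≤ P x Bᶜ + P x B := add_le_add_left h2 _
    rw [add_comm (P x Bᶜ)] at h5
    exact (h4.trans_le h5).ne' h3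
  -- the covering sets
  set CC : ℕ → Set Ω := fun n => match n with
    | 0 => (X 0) ⁻¹' ((⋃ k, Fk k)ᶜ)
    | 1 => (X t) ⁻¹' ((⋃ k, Fk k)ᶜ)
    | (k+2) => (X 0) ⁻¹' (Fk k) ∩ (X t) ⁻¹' (Fk k)
    with hCC_def
  have hCC0 : CC 0 = (X 0) ⁻¹' ((⋃ k, Fk k)ᶜ) := rfl
  have hCC1 : CC 1 = (X t) ⁻¹' ((⋃ k, Fk k)ᶜ) := rfl
  have hCC2 : ∀ k : ℕ, CC (k + 2) = (X 0) ⁻¹' (Fk k) ∩ (X t) ⁻¹' (Fk k) := fun k => rfl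
  have hCC_measF0 : ∀ n, MeasurableSet[F0 X t] (CC n) := by
    intro n
    match n with
    | 0 =>
      rw [hCC0]
      exact hpre 0 (zero_le : (0:ℝ≥0) ≤ t) _ (MeasurableSet.iUnion hFk_meas).compl
    | 1 =>
      rw [hCC1]
      exact hpre t le_rfl _ (MeasurableSet.iUnion hFk_meas).compl
    | (k+2) =>
      rw [hCC2 k]
      exact MeasurableSet.inter (hpre 0 (zero_le : (0:ℝ≥0) ≤ t) _ (hFk_meas k)) (hpre t le_rfl _ (hFk_meas k))
  have hCC_meas : ∀ n, MeasurableSet (CC n) := fun n => (hF0_le t) _ (hCC_measF0 n)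
  have hcover : (⋃ n, CC n) = Set.univ := by
    ext ω
    simp only [Set.mem_iUnion, Set.mem_univ, iff_true]
    by_cases h0 : X 0 ω ∈ ⋃ k, Fk k
    · by_cases h1 : X t ω ∈ ⋃ k, Fk k
      · obtain ⟨i, hi⟩ := Set.mem_iUnion.mp h0
        obtain ⟨j, hj⟩ := Set.mem_iUnion.mp h1
        refine ⟨max i j + 2, ?_⟩
        rw [hCC2]
        exact ⟨hFk_mono (le_max_left i j) hi, hFk_mono (le_max_right i j) hj⟩
      · refine ⟨1, ?_⟩
        rw [hCC1]
        exact h1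
    · refine ⟨0, ?_⟩
      rw [hCC0]
      exact h0
  have hQCC0 : Qmu Δ α h X P μ t (CC 0) = 0 := by
    refine hQzero _ (hCC_meas 0) fun x hx => ?_
    refine hnull_of_one x _ _ ((hCC_meas 0).inter (hA_meas t)) (hFk_full x hx) ?_
    intro ω hful hmem
    rw [hCC0] at hmem
    have hlt : ((0 : ℝ≥0) : ℝ≥0∞) < lifetime Δ X ω :=
      lt_of_le_of_lt (by exact_mod_cast (zero_le : (0:ℝ≥0) ≤ t)) hmem.2
    exact hmem.1 (hful 0 hlt)
  have hQCC1 : Qmu Δ α h X P μ t (CC 1) = 0 := by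
    refine hQzero _ (hCC_meas 1) fun x hx => ?_
    refine hnull_of_one x _ _ ((hCC_meas 1).inter (hA_meas t)) (hFk_full x hx) ?_
    intro ω hful hmem
    rw [hCC1] at hmem
    exact hmem.1 (hful t hmem.2)
  have hQCCk : ∀ k : ℕ, Qmu Δ α h X P μ t (CC (k + 2)) < ∞ := by
    intro k
    obtain ⟨c, Cb, hc, hCb, hbd⟩ := hFk_bd k
    set c0 : ℝ≥0∞ := ENNReal.ofReal (Real.exp (α * (t : ℝ))) with hc0
    have hCmeas : MeasurableSet (CC (k + 2)) := hCC_meas (k + 2)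
    have hb : ∀ x : S, QbarSet Δ α h X P x t (CC (k + 2)) ≤ Cb * (c0 * c⁻¹) := by
      intro x
      by_cases hx : x ∈ Fk k
      · rw [hQbar_eq]
        refine mul_le_mul' (hbd x hx).2 ?_
        have hptw : ∀ ω : Ω, (CC (k + 2)).indicator (g t) ω ≤ c0 * c⁻¹ := by
          intro ω
          by_cases hω : ω ∈ CC (k + 2)
          · rw [Set.indicator_of_mem hω]
            rw [hCC2 k] at hω
            exact mul_le_mul_right (ENNReal.inv_le_inv.mpr (hbd (X t ω) hω.2).1) c0
          · rw [Set.indicator_of_notMem hω]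
            exact zero_le
        calc (∫⁻ ω in A t, (CC (k + 2)).indicator (g t) ω ∂(P x))
            ≤ ∫⁻ _ω in A t, c0 * c⁻¹ ∂(P x) := lintegral_mono hptw
          _ = c0 * c⁻¹ * P x (A t) := setLIntegral_const _ _
          _ ≤ c0 * c⁻¹ * 1 := by
              haveI := hP_prob x
              exact mul_le_mul_right prob_le_one _
          _ = c0 * c⁻¹ := mul_one _
      · have h0 : P x (CC (k + 2) ∩ A t) = 0 := by
          refine hnull_of_one x _ {ω | X 0 ω = x} (hCmeas.inter (hA_meas t)) (hP_start x) ?_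
          intro ω hω hmem
          rw [hCC2 k] at hmem
          exact hx (hω ▸ hmem.1.1)
        rw [(hKx t _ hCmeas x).mpr (Or.inr h0)]
        exact zero_le
    have hQle : Qmu Δ α h X P μ t (CC (k + 2)) ≤ Cb * (c0 * c⁻¹) := by
      show (∫⁻ x, QbarSet Δ α h X P x t (CC (k + 2)) ∂μ) ≤ _
      calc (∫⁻ x, QbarSet Δ α h X P x t (CC (k + 2)) ∂μ)
          ≤ ∫⁻ _x, Cb * (c0 * c⁻¹) ∂μ := lintegral_mono hb
        _ = Cb * (c0 * c⁻¹) := by rw [lintegral_const, measure_univ, mul_one]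
    refine lt_of_le_of_lt hQle ?_
    exact ENNReal.mul_lt_top hCb
      (ENNReal.mul_lt_top ENNReal.ofReal_lt_top (ENNReal.inv_lt_top.mpr hc))
  have hCCmem : ∀ n, CC n ∈ Mmu Δ α h X P μ t :=
    fun n => ⟨CC n, ∅, hCC_measF0 n, @MeasurableSet.empty Ω (F0plus X t), by simp, fun T _ => hQempty T⟩
  
  -- construction of the extensions
  have hmem_iff : ∀ Λ : Set Ω, Λ ∈ Mmu Δ α h X P μ t ↔
      ∃ Λ' Γ : Set Ω, MeasurableSet[F0 X t] Λ' ∧ MeasurableSet[F0plus X t] Γ ∧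
        symmDiff Λ Λ' ⊆ Γ ∧ ∀ T : ℝ≥0, t < T → Qmu Δ α h X P μ T Γ = 0 :=
    fun Λ => Iff.rfl
  set ν : Set Ω → ℝ≥0∞ := fun Λ =>
    if hΛ : Λ ∈ Mmu Δ α h X P μ t then
      Qmu Δ α h X P μ t (Exists.choose ((hmem_iff Λ).mp hΛ)) else 0 with hν_def
  set ν' : Set Ω → ℝ≥0∞ := fun Λ =>
    if hΛ : Λ ∈ Mmu Δ α h X P μ t then
      PmuT Δ X P μ t (Exists.choose ((hmem_iff Λ).mp hΛ)) else 0 with hν'_def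
  have hν_spec : ∀ Λ Λ' Γ : Set Ω, MeasurableSet[F0 X t] Λ' → MeasurableSet[F0plus X t] Γ →
      symmDiff Λ Λ' ⊆ Γ → (∀ T : ℝ≥0, t < T → Qmu Δ α h X P μ T Γ = 0) →
      ν Λ = Qmu Δ α h X P μ t Λ' := by
    intro Λ Λ' Γ m1 m2 s1 q1
    have hΛ : Λ ∈ Mmu Δ α h X P μ t := (hmem_iff Λ).mpr ⟨Λ', Γ, m1, m2, s1, q1⟩
    obtain ⟨Γ₀, c1, c2, c3, c4⟩ := Exists.choose_spec ((hmem_iff Λ).mp hΛ)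
    rw [hν_def]
    simp only
    rw [dif_pos hΛ]
    exact (huniq Λ hΛ _ Γ₀ Λ' Γ ⟨c1, c2, c3, c4⟩ ⟨m1, m2, s1, q1⟩).1
  have hν'_spec : ∀ Λ Λ' Γ : Set Ω, MeasurableSet[F0 X t] Λ' → MeasurableSet[F0plus X t] Γ →
      symmDiff Λ Λ' ⊆ Γ → (∀ T : ℝ≥0, t < T → Qmu Δ α h X P μ T Γ = 0) →
      ν' Λ = PmuT Δ X P μ t Λ' := by
    intro Λ Λ' Γ m1 m2 s1 q1
    have hΛ : Λ ∈ Mmu Δ α h X P μ t := (hmem_iff Λ).mpr ⟨Λ', Γ, m1, m2, s1, q1⟩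
    obtain ⟨Γ₀, c1, c2, c3, c4⟩ := Exists.choose_spec ((hmem_iff Λ).mp hΛ)
    rw [hν'_def]
    simp only
    rw [dif_pos hΛ]
    exact (huniq Λ hΛ _ Γ₀ Λ' Γ ⟨c1, c2, c3, c4⟩ ⟨m1, m2, s1, q1⟩).2
  have hemptyrep : ∀ T : ℝ≥0, t < T → Qmu Δ α h X P μ T (∅ : Set Ω) = 0 :=
    fun T _ => hQempty T
  refine ⟨hMG, huniq, ⟨ν, hν_spec, ?_, ?_, ?_⟩, ⟨ν', hν'_spec, ?_, ?_, ?_⟩⟩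
  · -- ν ∅ = 0
    rw [hν_spec ∅ ∅ ∅ (@MeasurableSet.empty Ω (F0 X t)) (@MeasurableSet.empty Ω (F0plus X t))
      (by simp) hemptyrep]
    exact hQempty t
  · -- countable additivity of ν
    intro B hB hd
    obtain ⟨D, Γ, hDm, hDd, hΓm, hΓq, hsn, hsU⟩ := hdisjrep B hB hd
    rw [hν_spec _ _ _ (MeasurableSet.iUnion hDm) hΓm hsU hΓq]
    rw [hQcount D (fun n => (hF0_le t) _ (hDm n)) hDd]
    exact tsum_congr fun n => (hν_spec _ _ _ (hDm n) hΓm (hsn n) hΓq).symm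
  · -- σ-finiteness of ν
    refine ⟨CC, hCCmem, hcover, ?_⟩
    intro n
    have hval : ν (CC n) = Qmu Δ α h X P μ t (CC n) :=
      hν_spec (CC n) (CC n) ∅ (hCC_measF0 n) (@MeasurableSet.empty Ω (F0plus X t))
        (by simp) hemptyrep
    rw [hval]
    match n with
    | 0 => rw [hQCC0]; exact ENNReal.zero_lt_top
    | 1 => rw [hQCC1]; exact ENNReal.zero_lt_top
    | (k+2) => exact hQCCk k
  · -- ν' ∅ = 0
    rw [hν'_spec ∅ ∅ ∅ (@MeasurableSet.empty Ω (F0 X t)) (@MeasurableSet.empty Ω (F0plus X t))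
      (by simp) hemptyrep]
    show (∫⁻ x, P x ((∅ : Set Ω) ∩ A t) ∂μ) = 0
    simp
  · -- countable additivity of ν'
    intro B hB hd
    obtain ⟨D, Γ, hDm, hDd, hΓm, hΓq, hsn, hsU⟩ := hdisjrep B hB hd
    rw [hν'_spec _ _ _ (MeasurableSet.iUnion hDm) hΓm hsU hΓq]
    rw [hPcount D (fun n => (hF0_le t) _ (hDm n)) hDd]
    exact tsum_congr fun n => (hν'_spec _ _ _ (hDm n) hΓm (hsn n) hΓq).symm
  · -- finiteness of ν'
    rw [hν'_spec Set.univ Set.univ ∅ (@MeasurableSet.univ Ω (F0 X t)) (@MeasurableSet.empty Ω (F0plus X t))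
      (by simp) hemptyrep]
    show (∫⁻ x, P x (Set.univ ∩ A t) ∂μ) < ∞
    have hle : (∫⁻ x, P x (Set.univ ∩ A t) ∂μ) ≤ ∫⁻ _x, 1 ∂μ := by
      refine lintegral_mono fun x => ?_
      haveI := hP_prob x
      exact prob_le_one
    refine lt_of_le_of_lt hle ?_
    rw [lintegral_one, measure_univ]
    exact ENNReal.one_lt_top
end

section
/- For every probability measure μ on E_Δ: (i) if Λ ∈ M^μ_t then Λ ∩ {t<ζ} ∈ F^{h,μ}_t, and Q̄_{μ,t}(Λ; t<ζ) = ∫_{E_Δ} h(x)·E^h_x[e^{αt} I_Λ / h(X_t); t < ζ] μ(dx) for all Λ ∈ M^μ_t; (ii) if s < t then M^μ_s ⊂ M^μ_t. -/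
open MeasureTheory Set Filter
open scoped NNReal ENNReal

section Aux
variable {S : Type*} [MeasurableSpace S] {Ω : Type*}

variable {S : Type*} [MeasurableSpace S] {Ω : Type*}

-- lattice facts
lemma F0_mono (X : ℝ≥0 → Ω → S) {s t : ℝ≥0} (hst : s ≤ t) : F0 X s ≤ F0 X t :=
  iSup₂_le fun u hu => le_iSup₂ (f := fun (s : ℝ≥0) (_ : s ∈ Set.Iic t) =>
    MeasurableSpace.comap (X s) inferInstance) u (le_trans hu hst)

lemma F0_le_F0inf (X : ℝ≥0 → Ω → S) (t : ℝ≥0) : F0 X t ≤ F0inf X :=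
  iSup₂_le fun u _ => le_iSup (fun (s : ℝ≥0) => MeasurableSpace.comap (X s) inferInstance) u

lemma comap_le_F0 (X : ℝ≥0 → Ω → S) {u t : ℝ≥0} (h : u ≤ t) :
    MeasurableSpace.comap (X u) inferInstance ≤ F0 X t :=
  le_iSup₂ (f := fun (s : ℝ≥0) (_ : s ∈ Set.Iic t) =>
    MeasurableSpace.comap (X s) inferInstance) u h

lemma F0_le_F0plus (X : ℝ≥0 → Ω → S) (t : ℝ≥0) : F0 X t ≤ F0plus X t :=
  le_iInf₂ fun _ hs => F0_mono X (le_of_lt hs)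

lemma F0plus_le_F0 (X : ℝ≥0 → Ω → S) {t s : ℝ≥0} (hts : t < s) : F0plus X t ≤ F0 X s :=
  iInf₂_le (f := fun (u : ℝ≥0) (_ : u ∈ Set.Ioi t) => F0 X u) s hts

lemma F0plus_le_F0inf (X : ℝ≥0 → Ω → S) (t : ℝ≥0) : F0plus X t ≤ F0inf X :=
  le_trans (F0plus_le_F0 X (lt_add_one t)) (F0_le_F0inf X (t + 1))

lemma F0plus_mono (X : ℝ≥0 → Ω → S) {s t : ℝ≥0} (hst : s ≤ t) : F0plus X s ≤ F0plus X t :=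
  le_iInf₂ fun u hu => F0plus_le_F0 X (lt_of_le_of_lt hst hu)

lemma measurable_X (X : ℝ≥0 → Ω → S) (T : ℝ≥0) : Measurable[F0inf X] (X T) :=
  fun s hs => F0_le_F0inf X T _
    (comap_le_F0 X le_rfl _ (MeasurableSpace.measurableSet_comap.mpr ⟨s, hs, rfl⟩))

-- lifetime basics
variable (Δ : S) (X : ℝ≥0 → Ω → S)

lemma lifetime_le {ω : Ω} {u : ℝ≥0} (hu : X u ω = Δ) : lifetime Δ X ω ≤ u :=
  iInf₂_le (f := fun (t : ℝ≥0) (_ : X t ω = Δ) => (t : ℝ≥0∞)) u hu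

lemma ne_cem_of_lt_lifetime {ω : Ω} {T : ℝ≥0} (hT : (T : ℝ≥0∞) < lifetime Δ X ω) :
    X T ω ≠ Δ := fun hc => absurd (lifetime_le Δ X hc) (not_le.mpr hT)

variable (hX_absorb : ∀ (ω : Ω) (s t : ℝ≥0), s ≤ t → X s ω = Δ → X t ω = Δ)
include hX_absorb

lemma lt_lifetime_iff {ω : Ω} {T : ℝ≥0} :
    (T : ℝ≥0∞) < lifetime Δ X ω ↔ ∃ u : ℝ≥0, T < u ∧ X u ω ≠ Δ := by
  constructor
  · intro hT
    by_contra hc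
    push_neg at hc
    have hle : lifetime Δ X ω ≤ (T : ℝ≥0∞) := by
      refine ENNReal.le_of_forall_pos_le_add fun ε hε _ => ?_
      have : X (T + ε) ω = Δ := hc _ (lt_add_of_pos_right T hε)
      simpa using lifetime_le Δ X this
    exact absurd hT (not_lt.mpr hle)
  · rintro ⟨u, hTu, hu⟩
    refine lt_of_lt_of_le (b := (u : ℝ≥0∞)) (by exact_mod_cast hTu) (le_iInf₂ fun a ha => ?_)
    by_contra hau
    push_neg at hau
    have : a ≤ u := le_of_lt (by exact_mod_cast hau)
    exact hu (hX_absorb ω a u this ha)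

lemma lt_lifetime_iff_rat {ω : Ω} {T : ℝ≥0} :
    (T : ℝ≥0∞) < lifetime Δ X ω ↔
      ∃ q : ℚ, T < Real.toNNReal q ∧ X (Real.toNNReal q) ω ≠ Δ := by
  rw [lt_lifetime_iff Δ X hX_absorb]
  constructor
  · rintro ⟨u, hTu, hu⟩
    obtain ⟨q, hq1, hq2⟩ := exists_rat_btwn (show (T : ℝ) < u from hTu)
    have hq0 : (0 : ℝ) ≤ q := le_trans T.coe_nonneg hq1.le
    have hcoe : ((Real.toNNReal q : ℝ≥0) : ℝ) = q := Real.coe_toNNReal q hq0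
    refine ⟨q, ?_, fun hX => hu ?_⟩
    · rw [← NNReal.coe_lt_coe, hcoe]; exact hq1
    · exact hX_absorb ω _ u (by rw [← NNReal.coe_le_coe, hcoe]; exact hq2.le) hX
  · rintro ⟨q, h1, h2⟩; exact ⟨_, h1, h2⟩

lemma lt_lifetime_iff_rat_le {ω : Ω} {T s : ℝ≥0} (hTs : T < s) :
    (T : ℝ≥0∞) < lifetime Δ X ω ↔
      ∃ q : ℚ, (T < Real.toNNReal q ∧ Real.toNNReal q ≤ s) ∧ X (Real.toNNReal q) ω ≠ Δ := by
  rw [lt_lifetime_iff_rat Δ X hX_absorb]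
  constructor
  · rintro ⟨q, h1, h2⟩
    rcases le_or_gt (Real.toNNReal q) s with hle | hlt
    · exact ⟨q, ⟨h1, hle⟩, h2⟩
    · obtain ⟨q', hq1, hq2⟩ := exists_rat_btwn (show (T : ℝ) < s from hTs)
      have hq0 : (0 : ℝ) ≤ q' := le_trans T.coe_nonneg hq1.le
      have hcoe : ((Real.toNNReal q' : ℝ≥0) : ℝ) = q' := Real.coe_toNNReal q' hq0
      refine ⟨q', ⟨?_, ?_⟩, fun hX => h2 ?_⟩
      · rw [← NNReal.coe_lt_coe, hcoe]; exact hq1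
      · rw [← NNReal.coe_le_coe, hcoe]; exact hq2.le
      · refine hX_absorb ω _ _ ?_ hX
        rw [← NNReal.coe_le_coe, hcoe]
        exact le_trans hq2.le (NNReal.coe_le_coe.mpr hlt.le)
  · rintro ⟨q, ⟨h1, _⟩, h2⟩; exact ⟨q, h1, h2⟩

lemma Lset_measurable_F0 [MeasurableSingletonClass S] {T s : ℝ≥0} (hTs : T < s) :
    MeasurableSet[F0 X s] {ω | (T : ℝ≥0∞) < lifetime Δ X ω} := by
  have heq : {ω | (T : ℝ≥0∞) < lifetime Δ X ω} =
      ⋃ q : ℚ, if T < Real.toNNReal q ∧ Real.toNNReal q ≤ s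
        then X (Real.toNNReal q) ⁻¹' {Δ}ᶜ else ∅ := by
    ext ω
    simp only [mem_setOf_eq, mem_iUnion]
    rw [lt_lifetime_iff_rat_le Δ X hX_absorb hTs]
    constructor
    · rintro ⟨q, hq, h2⟩; exact ⟨q, by simp [hq, h2, Set.mem_preimage]⟩
    · rintro ⟨q, hq⟩
      by_cases hc : T < Real.toNNReal q ∧ Real.toNNReal q ≤ s
      · simp only [hc, if_true, Set.mem_preimage, Set.mem_compl_iff, Set.mem_singleton_iff] at hq
        exact ⟨q, hc, hq⟩
      · simp [hc] at hq
  rw [heq]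
  refine MeasurableSet.iUnion fun q => ?_
  by_cases hc : T < Real.toNNReal q ∧ Real.toNNReal q ≤ s
  · simp only [hc, if_true]
    exact comap_le_F0 X hc.2 _
      (MeasurableSpace.measurableSet_comap.mpr ⟨{Δ}ᶜ, (measurableSet_singleton Δ).compl, rfl⟩)
  · simp only [hc, if_false]; exact @MeasurableSet.empty Ω (F0 X s)

lemma Lset_measurable_F0plus [MeasurableSingletonClass S] (T : ℝ≥0) :
    MeasurableSet[F0plus X T] {ω | (T : ℝ≥0∞) < lifetime Δ X ω} := by
  rw [F0plus, MeasurableSpace.measurableSet_iInf]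
  intro s
  rw [MeasurableSpace.measurableSet_iInf]
  intro hs
  exact Lset_measurable_F0 Δ X hX_absorb hs

lemma Lset_measurable_F0inf [MeasurableSingletonClass S] (T : ℝ≥0) :
    MeasurableSet[F0inf X] {ω | (T : ℝ≥0∞) < lifetime Δ X ω} :=
  F0_le_F0inf X (T + 1) _ (Lset_measurable_F0 Δ X hX_absorb (lt_add_one T))

lemma Lset_union (t : ℝ≥0) :
    {ω | (t : ℝ≥0∞) < lifetime Δ X ω} =
      ⋃ n : ℕ, {ω | ((t + ((n : ℝ≥0) + 1)⁻¹ : ℝ≥0) : ℝ≥0∞) < lifetime Δ X ω} := by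
  ext ω
  simp only [mem_setOf_eq, mem_iUnion]
  constructor
  · intro ht
    obtain ⟨r, hr1, hr2⟩ := ENNReal.lt_iff_exists_nnreal_btwn.mp ht
    have hrt : t < r := by exact_mod_cast hr1
    obtain ⟨n, hn⟩ := exists_nat_one_div_lt (show (0 : ℝ) < (r : ℝ) - t by
      rw [sub_pos]; exact_mod_cast hrt)
    refine ⟨n, lt_of_le_of_lt ?_ hr2⟩
    have h1 : ((n : ℝ≥0) + 1)⁻¹ ≤ r - t := by
      rw [← NNReal.coe_le_coe]
      push_cast
      rw [NNReal.coe_sub hrt.le]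
      calc ((n : ℝ) + 1)⁻¹ = 1 / ((n : ℝ) + 1) := (one_div _).symm
        _ ≤ (r : ℝ) - t := hn.le
    have : t + ((n : ℝ≥0) + 1)⁻¹ ≤ r := by
      calc t + ((n : ℝ≥0) + 1)⁻¹ ≤ t + (r - t) := add_le_add le_rfl h1
        _ = r := add_tsub_cancel_of_le hrt.le
    exact_mod_cast this
  · rintro ⟨n, hn⟩
    refine lt_of_le_of_lt ?_ hn
    exact_mod_cast le_self_add

omit hX_absorb

lemma mem_Lset_shift (θ : ℝ≥0 → Ω → Ω)
    (hshift : ∀ (s t : ℝ≥0) (ω : Ω), X t (θ s ω) = X (t + s) ω)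
    (hX_absorb : ∀ (ω : Ω) (s t : ℝ≥0), s ≤ t → X s ω = Δ → X t ω = Δ)
    (t : ℝ≥0) (ω : Ω) :
    ((t : ℝ≥0∞) < lifetime Δ X ω) ↔ ((0 : ℝ≥0) : ℝ≥0∞) < lifetime Δ X (θ t ω) := by
  rw [lt_lifetime_iff Δ X hX_absorb, lt_lifetime_iff Δ X hX_absorb]
  constructor
  · rintro ⟨u, htu, hu⟩
    refine ⟨u - t, tsub_pos_of_lt htu, ?_⟩
    rw [hshift, tsub_add_cancel_of_le htu.le]; exact hu
  · rintro ⟨v, hv, hXv⟩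
    rw [hshift] at hXv
    exact ⟨v + t, lt_add_of_pos_left t hv, hXv⟩

end Aux

section Key
variable {S : Type*} [MeasurableSpace S] [MeasurableSingletonClass S] {Ω : Type*}

lemma key_null (Δ : S) (X : ℝ≥0 → Ω → S) (P : S → @Measure Ω (F0inf X))
    (h : S → ℝ≥0∞) (α : ℝ)
    (h_pos : ∀ x : S, x ≠ Δ → 0 < h x ∧ h x < ∞)
    (hX_absorb : ∀ (ω : Ω) (s t : ℝ≥0), s ≤ t → X s ω = Δ → X t ω = Δ)
    (h_meas : Measurable h)
    (hP_prob : ∀ x : S, IsProbabilityMeasure (P x))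
    (hP_meas : ∀ Λ : Set Ω, MeasurableSet[F0inf X] Λ → Measurable fun x => P x Λ)
    (hP_start : ∀ x : S, P x {ω | X 0 ω = x} = 1)
    (μ : Measure S) (t : ℝ≥0) (Γ : Set Ω) (hΓ : MeasurableSet[F0inf X] Γ)
    (hQ : ∀ T : ℝ≥0, t < T → Qmu Δ α h X P μ T Γ = 0) :
    ∀ᵐ x ∂μ, P x (Γ ∩ {ω | (t : ℝ≥0∞) < lifetime Δ X ω}) = 0 := by
  letI : MeasurableSpace Ω := F0inf X
  set L : ℝ≥0 → Set Ω := fun T => {ω | (T : ℝ≥0∞) < lifetime Δ X ω} with hL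
  have hLmeas : ∀ T : ℝ≥0, MeasurableSet[F0inf X] (L T) := fun T =>
    Lset_measurable_F0inf Δ X hX_absorb T
  set T : ℕ → ℝ≥0 := fun n => t + ((n : ℝ≥0) + 1)⁻¹ with hT
  have hTt : ∀ n, t < T n := fun n =>
    lt_add_of_pos_right t (by positivity)
  set g : ℝ≥0 → Ω → ℝ≥0∞ := fun T ω =>
    ENNReal.ofReal (Real.exp (α * (T : ℝ))) * Γ.indicator 1 ω * (h (X T ω))⁻¹ with hg
  have hgmeas : ∀ T : ℝ≥0, Measurable[F0inf X] (g T) := fun T =>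
    ((measurable_const.mul (measurable_one.indicator hΓ)).mul
      ((h_meas.comp (measurable_X X T)).inv))
  have hPm : Measurable (P ·) := Measure.measurable_of_measurable_coe _ hP_meas
  have hQbar : ∀ (x : S) (T : ℝ≥0), QbarSet Δ α h X P x T Γ
      = h x * ∫⁻ ω, (L T).indicator (g T) ω ∂(P x) := by
    intro x T
    rw [lintegral_indicator (hLmeas T)]
    rfl
  have hmeasQ : ∀ T : ℝ≥0, Measurable fun x => QbarSet Δ α h X P x T Γ := by
    intro T
    simp only [hQbar]
    exact h_meas.mul
      ((Measure.measurable_lintegral ((hgmeas T).indicator (hLmeas T))).comp hPm)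
  have hae : ∀ᵐ x ∂μ, ∀ n : ℕ, QbarSet Δ α h X P x (T n) Γ = 0 := by
    rw [ae_all_iff]
    intro n
    exact (lintegral_eq_zero_iff (hmeasQ (T n))).mp (hQ (T n) (hTt n))
  filter_upwards [hae] with x hx
  rcases eq_or_ne (h x) 0 with hx0 | hx0
  · -- then x = Δ and P x dies immediately
    have hxΔ : x = Δ := by
      by_contra hne
      exact absurd hx0 (h_pos x hne).1.ne'
    haveI := hP_prob x
    have hsub : Γ ∩ L t ⊆ {ω | X 0 ω = x}ᶜ := by
      rintro ω ⟨-, hω⟩ hc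
      have : lifetime Δ X ω ≤ ((0 : ℝ≥0) : ℝ≥0∞) := lifetime_le Δ X (hxΔ ▸ hc)
      exact absurd (lt_of_lt_of_le hω this) (by simp)
    have h0 : P x {ω | X 0 ω = x}ᶜ = 0 := by
      have hms : MeasurableSet[F0inf X] {ω | X 0 ω = x} :=
        measurable_X X 0 (measurableSet_singleton x)
      rw [measure_compl hms (measure_ne_top _ _), hP_start x, measure_univ, tsub_self]
    exact le_antisymm (le_trans (measure_mono hsub) h0.le) (zero_le)
  · -- main case
    have hnullT : ∀ n : ℕ, P x (Γ ∩ L (T n)) = 0 := by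
      intro n
      have hI : ∫⁻ ω in L (T n), g (T n) ω ∂(P x) = 0 := by
        have := hx n
        rw [hQbar, lintegral_indicator (hLmeas (T n))] at this
        exact (mul_eq_zero.mp this).resolve_left hx0
      have hzero : (P x).restrict (L (T n)) {ω | g (T n) ω ≠ 0} = 0 := by
        have := (lintegral_eq_zero_iff (hgmeas (T n))).mp hI
        simpa [EventuallyEq, ae_iff] using this
      have hsub : Γ ∩ L (T n) ⊆ {ω | g (T n) ω ≠ 0} ∩ L (T n) := by
        rintro ω ⟨hωΓ, hωL⟩
        refine ⟨?_, hωL⟩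
        have hXne : X (T n) ω ≠ Δ := ne_cem_of_lt_lifetime Δ X hωL
        have h1 : g (T n) ω
            = ENNReal.ofReal (Real.exp (α * ((T n : ℝ≥0) : ℝ))) * (h (X (T n) ω))⁻¹ := by
          simp [hg, indicator_of_mem hωΓ]
        show g (T n) ω ≠ 0
        rw [h1]
        exact mul_ne_zero (ENNReal.ofReal_pos.mpr (Real.exp_pos _)).ne'
          (ENNReal.inv_ne_zero.mpr (h_pos _ hXne).2.ne)
      refine le_antisymm ?_ (zero_le)
      calc P x (Γ ∩ L (T n)) ≤ P x ({ω | g (T n) ω ≠ 0} ∩ L (T n)) := measure_mono hsub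
        _ = (P x).restrict (L (T n)) {ω | g (T n) ω ≠ 0} :=
          (Measure.restrict_apply ((hgmeas (T n)) (measurableSet_singleton 0).compl)).symm
        _ = 0 := hzero
    have hunion : Γ ∩ L t = ⋃ n : ℕ, Γ ∩ L (T n) := by
      rw [← inter_iUnion]
      congr 1
      exact Lset_union Δ X hX_absorb t
    rw [hunion]
    exact measure_iUnion_null hnullT

end Key

section ZeroOne
variable {S : Type*} [MeasurableSpace S] [MeasurableSingletonClass S] {Ω : Type*}

lemma zero_one_L (Δ : S) (X : ℝ≥0 → Ω → S) (θ : ℝ≥0 → Ω → Ω)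
    (P : S → @Measure Ω (F0inf X))
    (hX_absorb : ∀ (ω : Ω) (s t : ℝ≥0), s ≤ t → X s ω = Δ → X t ω = Δ)
    (hshift : ∀ (s t : ℝ≥0) (ω : Ω), X t (θ s ω) = X (t + s) ω)
    (hP_prob : ∀ x : S, IsProbabilityMeasure (P x))
    (hP_meas : ∀ Λ : Set Ω, MeasurableSet[F0inf X] Λ → Measurable fun x => P x Λ)
    (hMarkov : ∀ (s : ℝ≥0) (x : S) (Y : Ω → ℝ≥0∞), Measurable[F0inf X] Y →
      ∀ Λ : Set Ω, MeasurableSet[F0plus X s] Λ →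
        ∫⁻ ω in Λ, Y (θ s ω) ∂(P x)
          = ∫⁻ ω in Λ, (∫⁻ ω', Y ω' ∂(P (X s ω))) ∂(P x))
    (t : ℝ≥0) (x : S) :
    P x (symmDiff {ω | (t : ℝ≥0∞) < lifetime Δ X ω}
      ((X t) ⁻¹' {y | P y {ω | ((0 : ℝ≥0) : ℝ≥0∞) < lifetime Δ X ω} = 1})) = 0 := by
  letI : MeasurableSpace Ω := F0inf X
  haveI := hP_prob x
  set L0 : Set Ω := {ω | ((0 : ℝ≥0) : ℝ≥0∞) < lifetime Δ X ω} with hL0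
  set Lt : Set Ω := {ω | (t : ℝ≥0∞) < lifetime Δ X ω} with hLt
  have hL0meas : MeasurableSet L0 := Lset_measurable_F0inf Δ X hX_absorb 0
  have hLtmeas : MeasurableSet Lt := Lset_measurable_F0inf Δ X hX_absorb t
  have hLtplus : MeasurableSet[F0plus X t] Lt := Lset_measurable_F0plus Δ X hX_absorb t
  set φ : S → ℝ≥0∞ := fun y => P y L0 with hφdef
  have hφ : Measurable φ := hP_meas _ hL0meas
  set f : Ω → ℝ≥0∞ := fun ω => φ (X t ω) with hfdef
  have hf : Measurable f := hφ.comp (measurable_X X t)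
  have hf1 : ∀ ω, f ω ≤ 1 := fun ω => prob_le_one
  set A : Set Ω := (X t) ⁻¹' {y | φ y = 1} with hA
  have key : ∀ Λ : Set Ω, MeasurableSet[F0plus X t] Λ →
      P x (Lt ∩ Λ) = ∫⁻ ω in Λ, f ω ∂(P x) := by
    intro Λ hΛ
    have hm := hMarkov t x (L0.indicator 1) (measurable_one.indicator hL0meas) Λ hΛ
    have hl : ∀ ω, L0.indicator (1 : Ω → ℝ≥0∞) (θ t ω) = Lt.indicator 1 ω := by
      intro ω
      have := mem_Lset_shift Δ X θ hshift hX_absorb t ω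
      by_cases hω : ω ∈ Lt
      · have h1 : θ t ω ∈ L0 := this.mp hω
        simp [Set.indicator_apply, hω, h1]
      · have h1 : θ t ω ∉ L0 := fun hc => hω (this.mpr hc)
        simp [Set.indicator_apply, hω, h1]
    calc P x (Lt ∩ Λ) = (P x).restrict Λ Lt := (Measure.restrict_apply hLtmeas).symm
      _ = ∫⁻ ω in Λ, Lt.indicator 1 ω ∂(P x) := (lintegral_indicator_one hLtmeas).symm
      _ = ∫⁻ ω in Λ, L0.indicator 1 (θ t ω) ∂(P x) := by
          exact lintegral_congr fun ω => (hl ω).symm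
      _ = ∫⁻ ω in Λ, (∫⁻ ω', L0.indicator 1 ω' ∂(P (X t ω))) ∂(P x) := hm
      _ = ∫⁻ ω in Λ, f ω ∂(P x) := by
          refine lintegral_congr fun ω => ?_
          rw [lintegral_indicator_one hL0meas]
  -- A \ Lt is null
  have h2 : P x ({ω | f ω ≠ 0} ∩ Ltᶜ) = 0 := by
    have := key Ltᶜ hLtplus.compl
    rw [inter_compl_self, measure_empty] at this
    have hz := (lintegral_eq_zero_iff hf).mp this.symm
    have hmne : MeasurableSet {ω | f ω ≠ 0} := hf (measurableSet_singleton 0).compl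
    have : (P x).restrict Ltᶜ {ω | f ω ≠ 0} = 0 := by
      simpa [EventuallyEq, ae_iff] using hz
    rwa [Measure.restrict_apply hmne] at this
  have hAnull : P x (A \ Lt) = 0 := by
    refine measure_mono_null ?_ h2
    rintro ω ⟨hωA, hωL⟩
    exact ⟨by simp only [hfdef, mem_setOf_eq]; rw [show φ (X t ω) = 1 from hωA]; exact one_ne_zero, hωL⟩
  -- Lt \ A is null
  have h1 : P x ({ω | (1 : ℝ≥0∞) - f ω ≠ 0} ∩ Lt) = 0 := by
    have hkey := key Lt hLtplus
    rw [inter_self] at hkey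
    have hfint : ∫⁻ ω in Lt, f ω ∂(P x) ≠ ⊤ := by
      rw [← hkey]; exact measure_ne_top _ _
    have hsub : ∫⁻ ω in Lt, (1 : ℝ≥0∞) - f ω ∂(P x) = 0 := by
      rw [lintegral_sub hf hfint (ae_of_all _ hf1), ← hkey, lintegral_one,
        Measure.restrict_apply_univ, tsub_self]
    have hz := (lintegral_eq_zero_iff (measurable_const.sub hf)).mp hsub
    have hmne : MeasurableSet {ω | (1 : ℝ≥0∞) - f ω ≠ 0} :=
      (measurable_const.sub hf) (measurableSet_singleton 0).compl
    have : (P x).restrict Lt {ω | (1 : ℝ≥0∞) - f ω ≠ 0} = 0 := by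
      simpa [EventuallyEq, ae_iff] using hz
    rwa [Measure.restrict_apply hmne] at this
  have hLnull : P x (Lt \ A) = 0 := by
    refine measure_mono_null ?_ h1
    rintro ω ⟨hωL, hωA⟩
    refine ⟨?_, hωL⟩
    have hne : f ω ≠ 1 := fun hc => hωA hc
    have hlt : f ω < 1 := lt_of_le_of_ne (hf1 ω) hne
    simpa [tsub_eq_zero_iff_le] using not_le.mpr hlt
  rw [Set.symmDiff_def]
  exact measure_union_null hLnull hAnull

end ZeroOne


theorem Mmu_relation_with_Fhmu_and_monotone
    {S : Type*} [MeasurableSpace S] [TopologicalSpace S] [BorelSpace S]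
    [StandardBorelSpace S] {Ω : Type*} (Δ : S)
    (X : ℝ≥0 → Ω → S) (θ : ℝ≥0 → Ω → Ω) (P : S → @Measure Ω (F0inf X))
    (h : S → ℝ≥0∞) (α : ℝ) (hα : 0 < α)
    (h_meas : Measurable h) (h_cem : h Δ = 0)
    (h_pos : ∀ x : S, x ≠ Δ → 0 < h x ∧ h x < ∞)
    (hX_rc : ∀ (ω : Ω) (t : ℝ≥0),
      Filter.Tendsto (fun s => X s ω) (nhdsWithin t (Set.Ioi t)) (nhds (X t ω)))
    (hX_absorb : ∀ (ω : Ω) (s t : ℝ≥0), s ≤ t → X s ω = Δ → X t ω = Δ)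
    (hshift : ∀ (s t : ℝ≥0) (ω : Ω), X t (θ s ω) = X (t + s) ω)
    (hP_prob : ∀ x : S, IsProbabilityMeasure (P x))
    (hP_meas : ∀ Λ : Set Ω, MeasurableSet[F0inf X] Λ → Measurable fun x => P x Λ)
    (hP_start : ∀ x : S, P x {ω | X 0 ω = x} = 1)
    (hMarkov : ∀ (s : ℝ≥0) (x : S) (Y : Ω → ℝ≥0∞), Measurable[F0inf X] Y →
      ∀ Λ : Set Ω, MeasurableSet[F0plus X s] Λ →
        ∫⁻ ω in Λ, Y (θ s ω) ∂(P x)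
          = ∫⁻ ω in Λ, (∫⁻ ω', Y ω' ∂(P (X s ω))) ∂(P x))
    :
    ∀ (μ : Measure S), IsProbabilityMeasure μ → ∀ t : ℝ≥0,
      (∀ Λ ∈ Mmu Δ α h X P μ t,
        (Λ ∩ {ω | (t : ℝ≥0∞) < lifetime Δ X ω}) ∈ Fhmu X P μ t ∧
        ∀ Λ' Γ : Set Ω, MeasurableSet[F0 X t] Λ' → MeasurableSet[F0plus X t] Γ →
          symmDiff Λ Λ' ⊆ Γ → (∀ T : ℝ≥0, t < T → Qmu Δ α h X P μ T Γ = 0) →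
          Qmu Δ α h X P μ t Λ' = Qmu Δ α h X P μ t Λ) ∧
      (∀ s : ℝ≥0, s < t → Mmu Δ α h X P μ s ⊆ Mmu Δ α h X P μ t) := by
  intro μ _ t
  constructor
  · intro Λ hΛ
    obtain ⟨Λ', Γ, hΛ', hΓp, hsd, hQ⟩ := hΛ
    have hΓ : MeasurableSet[F0inf X] Γ := F0plus_le_F0inf X t _ hΓp
    have hnull : ∀ᵐ x ∂μ, P x (Γ ∩ {ω | (t : ℝ≥0∞) < lifetime Δ X ω}) = 0 :=
      key_null Δ X P h α h_pos hX_absorb h_meas hP_prob hP_meas hP_start μ t Γ hΓ hQ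
    constructor
    · -- Fhmu membership
      set Lt : Set Ω := {ω | (t : ℝ≥0∞) < lifetime Δ X ω} with hLtdef
      set φ : S → ℝ≥0∞ := fun y => P y {ω | ((0 : ℝ≥0) : ℝ≥0∞) < lifetime Δ X ω} with hφdef
      set A : Set Ω := (X t) ⁻¹' {y | φ y = 1} with hAdef
      have hφm : Measurable φ := hP_meas _ (Lset_measurable_F0inf Δ X hX_absorb 0)
      have hAm : MeasurableSet[F0 X t] A :=
        comap_le_F0 X le_rfl _ (MeasurableSpace.measurableSet_comap.mpr
          ⟨{y | φ y = 1}, hφm (measurableSet_singleton 1), rfl⟩)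
      have hLtm : MeasurableSet[F0inf X] Lt := Lset_measurable_F0inf Δ X hX_absorb t
      have hAinf : MeasurableSet[F0inf X] A := F0_le_F0inf X t _ hAm
      have hsdnull : ∀ x : S, P x (symmDiff Lt A) = 0 := fun x =>
        zero_one_L Δ X θ P hX_absorb hshift hP_prob hP_meas hMarkov t x
      refine ⟨Λ' ∩ A, (Γ ∩ Lt) ∪ symmDiff Lt A, hΛ'.inter hAm,
        (hΓ.inter hLtm).union (hLtm.symmDiff hAinf), ?_, ?_⟩
      · rintro ω hω
        rw [Set.mem_symmDiff] at hω
        rcases hω with ⟨⟨hωΛ, hωL⟩, hnot⟩ | ⟨⟨hωΛ', hωA⟩, hnot⟩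
        · by_cases hA' : ω ∈ A
          · have hωΛ'n : ω ∉ Λ' := fun hc => hnot ⟨hc, hA'⟩
            exact Set.mem_union_left _ ⟨hsd (Set.mem_symmDiff.mpr (Or.inl ⟨hωΛ, hωΛ'n⟩)), hωL⟩
          · exact Set.mem_union_right _ (Set.mem_symmDiff.mpr (Or.inl ⟨hωL, hA'⟩))
        · by_cases hL' : ω ∈ Lt
          · have hωΛn : ω ∉ Λ := fun hc => hnot ⟨hc, hL'⟩
            exact Set.mem_union_left _ ⟨hsd (Set.mem_symmDiff.mpr (Or.inr ⟨hωΛ', hωΛn⟩)), hL'⟩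
          · exact Set.mem_union_right _ (Set.mem_symmDiff.mpr (Or.inr ⟨hωA, hL'⟩))
      · show (∫⁻ x, P x ((Γ ∩ Lt) ∪ symmDiff Lt A) ∂μ) = 0
        have hae : (fun x => P x ((Γ ∩ Lt) ∪ symmDiff Lt A)) =ᵐ[μ] 0 := by
          filter_upwards [hnull] with x hx
          exact measure_union_null hx (hsdnull x)
        rw [lintegral_congr_ae hae]; simp
    · -- Qmu equality
      intro Λ'' Γ'' hΛ''m hΓ''p hsd'' hQ''
      have hΓ''m : MeasurableSet[F0inf X] Γ'' := F0plus_le_F0inf X t _ hΓ''p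
      have hnull'' : ∀ᵐ x ∂μ, P x (Γ'' ∩ {ω | (t : ℝ≥0∞) < lifetime Δ X ω}) = 0 :=
        key_null Δ X P h α h_pos hX_absorb h_meas hP_prob hP_meas hP_start μ t Γ'' hΓ''m hQ''
      show (∫⁻ x, QbarSet Δ α h X P x t Λ'' ∂μ) = ∫⁻ x, QbarSet Δ α h X P x t Λ ∂μ
      refine lintegral_congr_ae ?_
      filter_upwards [hnull''] with x hx
      show QbarSet Δ α h X P x t Λ'' = QbarSet Δ α h X P x t Λ
      unfold QbarSet Qbar
      congr 1
      refine lintegral_congr_ae ?_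
      have hΓ0 : (P x).restrict {ω | (t : ℝ≥0∞) < lifetime Δ X ω} Γ'' = 0 := by
        rw [Measure.restrict_apply hΓ''m]; exact hx
      refine ae_iff.mpr (measure_mono_null ?_ hΓ0)
      intro ω hω
      simp only [mem_setOf_eq] at hω
      by_contra hc
      refine hω ?_
      have hiff : ω ∈ Λ ↔ ω ∈ Λ'' := by
        constructor
        · intro h1; by_contra h2; exact hc (hsd'' (Set.mem_symmDiff.mpr (Or.inl ⟨h1, h2⟩)))
        · intro h1; by_contra h2; exact hc (hsd'' (Set.mem_symmDiff.mpr (Or.inr ⟨h1, h2⟩)))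
      by_cases hm : ω ∈ Λ
      · have hm' : ω ∈ Λ'' := hiff.mp hm
        simp [Set.indicator_apply, hm, hm']
      · have hm' : ω ∉ Λ'' := fun hc' => hm (hiff.mpr hc')
        simp [Set.indicator_apply, hm, hm']
  · intro s hst Λ hΛ
    obtain ⟨Λ', Γ, h1, h2, h3, h4⟩ := hΛ
    exact ⟨Λ', Γ, F0_mono X hst.le _ h1, F0plus_mono X hst.le _ h2, h3,
      fun T hT => h4 T (lt_trans hst hT)⟩
end
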